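/- In the above setup, for every t ∈ ℕ the dual iterates of Algorithm 1 satisfy the uniform disagreement bound Σ_{i=1}^M ‖λ_i^{t+1} − (1/M)Σ_{j=1}^M λ_j^{t+1}‖² ≤ 4β²ψ̃²M/ε̃³, where ε̃ := 1 − κ̃ > 0. -/

import Mathlib

set_option maxHeartbeats 1000000 in
/-- **Uniform disagreement bound for the dual iterates of the attack-free
Algorithm 1 (Lemma 8).** -/
theorem attack_free_dual_disagreement_bound
    (d M : ℕ) (hM : 1 ≤ M)
    (β θ : ℝ) (hβ : 0 ≤ β) (hθ : 0 ≤ θ) (hβθ : β * θ ≤ 2)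
    (ψt : ℝ) (hψt : 0 ≤ ψt)
    (Et : Matrix (Fin M) (Fin M) ℝ)
    (hEnn : ∀ i j, 0 ≤ Et i j)
    (hErow : ∀ i, ∑ j, Et i j = 1)
    (hEcol : ∀ j, ∑ i, Et i j = 1)
    (κt : ℝ)
    (hκt : κt = ‖LinearMap.toContinuousLinearMap
        (Matrix.toEuclideanLin (Et - Matrix.of fun _ _ => (M : ℝ)⁻¹))‖ ^ 2)
    (hκtlt : κt < 1)
    (εt : ℝ) (hεt : εt = 1 - κt)
    (g : Fin M → ℕ → EuclideanSpace ℝ (Fin d))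
    (hg : ∀ i t, ‖g i t‖ ≤ ψt)
    (lam lamhalf : Fin M → ℕ → EuclideanSpace ℝ (Fin d))
    (hlam0 : ∀ i, lam i 0 = 0)
    (hlamhalf : ∀ i t, lamhalf i t = (1 - β * θ) • lam i t + β • g i t)
    (hlamstep : ∀ i t, lam i (t + 1) = ∑ j, Et i j • lamhalf j t) :
    ∀ t, ∑ i, ‖lam i (t + 1) - (M : ℝ)⁻¹ • ∑ j, lam j (t + 1)‖ ^ 2
      ≤ 4 * β ^ 2 * ψt ^ 2 * (M : ℝ) / εt ^ 3 := by
  classical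
  have hMpos : (0:ℝ) < M := by exact_mod_cast hM
  set A : Matrix (Fin M) (Fin M) ℝ := Et - Matrix.of fun _ _ => (M : ℝ)⁻¹ with hAdef
  have hArow : ∀ i, ∑ j, A i j = 0 := by
    intro i
    simp only [hAdef, Matrix.sub_apply, Matrix.of_apply, Finset.sum_sub_distrib, hErow i,
      Finset.sum_const, Finset.card_univ, Fintype.card_fin, nsmul_eq_mul]
    field_simp
    ring
  have hκnn : 0 ≤ κt := by rw [hκt]; positivity
  set r : ℝ := Real.sqrt κt with hr
  have hrnn : 0 ≤ r := Real.sqrt_nonneg _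
  have hrsq : r ^ 2 = κt := Real.sq_sqrt hκnn
  have hrlt : r < 1 := by nlinarith
  have h1r : 0 < 1 - r := by linarith
  -- operator norm bound
  have hAop : ∀ u : EuclideanSpace ℝ (Fin M), ‖Matrix.toEuclideanLin A u‖ ≤ r * ‖u‖ := by
    intro u
    have h1 : ‖LinearMap.toContinuousLinearMap (Matrix.toEuclideanLin A)‖ = r := by
      rw [hr, hκt, Real.sqrt_sq (norm_nonneg _)]
    calc ‖Matrix.toEuclideanLin A u‖
        = ‖LinearMap.toContinuousLinearMap (Matrix.toEuclideanLin A) u‖ := rfl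
      _ ≤ ‖LinearMap.toContinuousLinearMap (Matrix.toEuclideanLin A)‖ * ‖u‖ :=
          (LinearMap.toContinuousLinearMap (Matrix.toEuclideanLin A)).le_opNorm u
      _ = r * ‖u‖ := by rw [h1]
  have hnorm : ∀ (x : EuclideanSpace ℝ (Fin d)), ‖x‖ ^ 2 = ∑ k, (x k) ^ 2 := fun x => by
    simpa using PiLp.norm_sq_eq_of_L2 _ x
  have hnormM : ∀ (x : EuclideanSpace ℝ (Fin M)), ‖x‖ ^ 2 = ∑ k, (x k) ^ 2 := fun x => by
    simpa using PiLp.norm_sq_eq_of_L2 _ x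
  have hsum_apply : ∀ (f : Fin M → EuclideanSpace ℝ (Fin d)) (k : Fin d),
      (∑ x, f x) k = ∑ x, f x k := by
    intro f k
    exact map_sum (EuclideanSpace.proj k : EuclideanSpace ℝ (Fin d) →L[ℝ] ℝ) f Finset.univ
  -- key contraction on families of vectors
  have key : ∀ v : Fin M → EuclideanSpace ℝ (Fin d),
      ∑ i, ‖∑ j, A i j • v j‖ ^ 2 ≤ κt * ∑ j, ‖v j‖ ^ 2 := by
    intro v
    calc ∑ i, ‖∑ j, A i j • v j‖ ^ 2
        = ∑ i, ∑ k, (∑ j, A i j * v j k) ^ 2 := by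
          refine Finset.sum_congr rfl fun i _ => ?_
          rw [hnorm]
          refine Finset.sum_congr rfl fun k _ => ?_
          rw [hsum_apply]
          exact congrArg (· ^ 2) (Finset.sum_congr rfl fun j _ => rfl)
      _ = ∑ k, ∑ i, (∑ j, A i j * v j k) ^ 2 := Finset.sum_comm
      _ ≤ ∑ k, κt * ∑ j, (v j k) ^ 2 := by
          refine Finset.sum_le_sum fun k _ => ?_
          set u : EuclideanSpace ℝ (Fin M) := (WithLp.equiv 2 _).symm (fun j => v j k) with hu
          have h1 : ∑ i, (∑ j, A i j * v j k) ^ 2 = ‖Matrix.toEuclideanLin A u‖ ^ 2 := by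
            rw [hnormM]; rfl
          have h2 : ‖u‖ ^ 2 = ∑ j, (v j k) ^ 2 := by rw [hnormM]; rfl
          rw [h1, ← h2, ← hrsq]
          have h3 := hAop u
          nlinarith [norm_nonneg (Matrix.toEuclideanLin A u), norm_nonneg u]
      _ = κt * ∑ j, ‖v j‖ ^ 2 := by
          rw [← Finset.mul_sum, Finset.sum_comm]
          exact congrArg _ (Finset.sum_congr rfl fun j _ => (hnorm (v j)).symm)
  -- product space setup
  have hVnorm : ∀ x : PiLp 2 (fun _ : Fin M => EuclideanSpace ℝ (Fin d)),
      ‖x‖ ^ 2 = ∑ i, ‖x i‖ ^ 2 := fun x => by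
    simpa using PiLp.norm_sq_eq_of_L2 _ x
  set δ : ℕ → PiLp 2 (fun _ : Fin M => EuclideanSpace ℝ (Fin d)) := fun t =>
    (WithLp.equiv 2 _).symm (fun i => lam i t - (M : ℝ)⁻¹ • ∑ j, lam j t) with hδ
  have hδapp : ∀ t i, δ t i = lam i t - (M : ℝ)⁻¹ • ∑ j, lam j t := fun t i => rfl
  set gf : ℕ → PiLp 2 (fun _ : Fin M => EuclideanSpace ℝ (Fin d)) := fun t =>
    (WithLp.equiv 2 _).symm (fun i => g i t) with hgf
  have hgfapp : ∀ t i, gf t i = g i t := fun t i => rfl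
  -- recurrence
  have hrec : ∀ t i, δ (t+1) i =
      ∑ j, A i j • ((1 - β * θ) • δ t j + β • g j t) := by
    intro t i
    have havg : (M : ℝ)⁻¹ • ∑ i', lam i' (t+1) = (M : ℝ)⁻¹ • ∑ j, lamhalf j t := by
      congr 1
      calc ∑ i', lam i' (t+1) = ∑ i', ∑ j, Et i' j • lamhalf j t :=
            Finset.sum_congr rfl fun i' _ => hlamstep i' t
        _ = ∑ j, (∑ i', Et i' j) • lamhalf j t := by
            rw [Finset.sum_comm]
            exact Finset.sum_congr rfl fun j _ => (Finset.sum_smul).symm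
        _ = ∑ j, lamhalf j t :=
            Finset.sum_congr rfl fun j _ => by rw [hEcol j, one_smul]
    have h1 : δ (t+1) i = ∑ j, A i j • lamhalf j t := by
      rw [hδapp, hlamstep, havg, Finset.smul_sum, ← Finset.sum_sub_distrib]
      refine Finset.sum_congr rfl fun j _ => ?_
      rw [hAdef]
      simp [Matrix.sub_apply, sub_smul]
    have h2 : ∀ j, A i j • lamhalf j t
        = A i j • ((1 - β * θ) • δ t j + β • g j t)
          + A i j • ((1 - β * θ) • ((M : ℝ)⁻¹ • ∑ j', lam j' t)) := by
      intro j
      rw [← smul_add]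
      congr 1
      rw [hlamhalf, hδapp, smul_sub]
      abel
    rw [h1]
    calc ∑ j, A i j • lamhalf j t
        = ∑ j, (A i j • ((1 - β * θ) • δ t j + β • g j t)
            + A i j • ((1 - β * θ) • ((M : ℝ)⁻¹ • ∑ j', lam j' t))) :=
          Finset.sum_congr rfl fun j _ => h2 j
      _ = ∑ j, A i j • ((1 - β * θ) • δ t j + β • g j t)
            + (∑ j, A i j) • ((1 - β * θ) • ((M : ℝ)⁻¹ • ∑ j', lam j' t)) := by
          rw [Finset.sum_add_distrib, Finset.sum_smul]
      _ = ∑ j, A i j • ((1 - β * θ) • δ t j + β • g j t) := by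
          rw [hArow i, zero_smul, add_zero]
  -- norm of the gradient family
  set C : ℝ := β * ψt * Real.sqrt M with hC
  have hCnn : 0 ≤ C := by positivity
  have hgfnorm : ∀ t, ‖gf t‖ ≤ ψt * Real.sqrt M := by
    intro t
    have h1 : ‖gf t‖ ^ 2 ≤ (ψt * Real.sqrt M) ^ 2 := by
      rw [hVnorm]
      have : ∑ i, ‖gf t i‖ ^ 2 ≤ ∑ _i : Fin M, ψt ^ 2 := by
        refine Finset.sum_le_sum fun i _ => ?_
        rw [hgfapp]
        exact pow_le_pow_left₀ (norm_nonneg _) (hg i t) 2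
      calc ∑ i, ‖gf t i‖ ^ 2 ≤ ∑ _i : Fin M, ψt ^ 2 := this
        _ = (M : ℝ) * ψt ^ 2 := by
            rw [Finset.sum_const, Finset.card_univ, Fintype.card_fin, nsmul_eq_mul]
        _ = (ψt * Real.sqrt M) ^ 2 := by
            rw [mul_pow, Real.sq_sqrt hMpos.le]; ring
    have h2 : 0 ≤ ψt * Real.sqrt M := by positivity
    nlinarith [norm_nonneg (gf t)]
  -- one-step contraction
  have hstep : ∀ t, ‖δ (t+1)‖ ≤ r * (‖δ t‖ + C) := by
    intro t
    set w : PiLp 2 (fun _ : Fin M => EuclideanSpace ℝ (Fin d)) :=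
      (1 - β * θ) • δ t + β • gf t with hw
    have hwapp : ∀ j, w j = (1 - β * θ) • δ t j + β • g j t := fun j => rfl
    have hsq : ‖δ (t+1)‖ ^ 2 ≤ κt * ‖w‖ ^ 2 := by
      rw [hVnorm, hVnorm, Finset.mul_sum]
      calc ∑ i, ‖δ (t+1) i‖ ^ 2
          = ∑ i, ‖∑ j, A i j • ((1 - β * θ) • δ t j + β • g j t)‖ ^ 2 :=
            Finset.sum_congr rfl fun i _ => by rw [hrec]
        _ ≤ κt * ∑ j, ‖(1 - β * θ) • δ t j + β • g j t‖ ^ 2 := key _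
        _ = ∑ i, κt * ‖w i‖ ^ 2 := by
            rw [← Finset.mul_sum]
            exact congrArg _ (Finset.sum_congr rfl fun j _ => by rw [hwapp])
    have hδw : ‖δ (t+1)‖ ≤ r * ‖w‖ := by
      nlinarith [norm_nonneg (δ (t+1)), norm_nonneg w, mul_nonneg hrnn (norm_nonneg w)]
    have habs : |1 - β * θ| ≤ 1 := by
      rw [abs_le]; constructor <;> nlinarith [mul_nonneg hβ hθ]
    have hwnorm : ‖w‖ ≤ ‖δ t‖ + C := by
      calc ‖w‖ ≤ ‖(1 - β * θ) • δ t‖ + ‖β • gf t‖ := norm_add_le _ _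
        _ = |1 - β * θ| * ‖δ t‖ + |β| * ‖gf t‖ := by
            rw [norm_smul, norm_smul, Real.norm_eq_abs, Real.norm_eq_abs]
        _ ≤ 1 * ‖δ t‖ + β * (ψt * Real.sqrt M) := by
            have h2 : |1 - β * θ| * ‖δ t‖ ≤ 1 * ‖δ t‖ :=
              mul_le_mul_of_nonneg_right habs (norm_nonneg _)
            have h3 : |β| * ‖gf t‖ ≤ β * (ψt * Real.sqrt M) := by
              rw [abs_of_nonneg hβ]
              exact mul_le_mul_of_nonneg_left (hgfnorm t) hβ
            linarith
        _ = ‖δ t‖ + C := by rw [hC]; ring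
    calc ‖δ (t+1)‖ ≤ r * ‖w‖ := hδw
      _ ≤ r * (‖δ t‖ + C) := by gcongr
  -- uniform bound by induction
  have hδ0 : δ 0 = 0 := by
    refine PiLp.ext fun i => ?_
    rw [hδapp]
    simp [hlam0]
  have hbound : ∀ t, ‖δ t‖ ≤ r * C / (1 - r) := by
    intro t
    induction t with
    | zero => rw [hδ0, norm_zero]; positivity
    | succ t ih =>
        calc ‖δ (t+1)‖ ≤ r * (‖δ t‖ + C) := hstep t
          _ ≤ r * (r * C / (1 - r) + C) := by
              have := mul_le_mul_of_nonneg_left (add_le_add_right ih C) hrnn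
              linarith
          _ = r * C / (1 - r) := by
              rw [div_add' _ _ _ (ne_of_gt h1r), mul_div_assoc]
              congr 1
              field_simp
              ring
  -- conclusion
  intro t
  have hεpos : 0 < εt := by rw [hεt]; linarith
  have hεle1 : εt ≤ 1 := by rw [hεt]; linarith
  have hε2 : εt ≤ 2 * (1 - r) := by rw [hεt, ← hrsq]; nlinarith
  have hgoal : ∑ i, ‖lam i (t + 1) - (M : ℝ)⁻¹ • ∑ j, lam j (t + 1)‖ ^ 2
      = ‖δ (t+1)‖ ^ 2 := by
    rw [hVnorm]
    exact Finset.sum_congr rfl fun i _ => by rw [hδapp]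
  rw [hgoal]
  have h1 : ‖δ (t+1)‖ ^ 2 ≤ (r * C / (1 - r)) ^ 2 := by
    have := hbound (t+1)
    nlinarith [norm_nonneg (δ (t+1)), div_nonneg (mul_nonneg hrnn hCnn) h1r.le]
  refine h1.trans ?_
  have hC2 : C ^ 2 = β ^ 2 * ψt ^ 2 * (M : ℝ) := by
    rw [hC, mul_pow, mul_pow, Real.sq_sqrt hMpos.le]
  rw [div_pow, mul_pow, hrsq, hC2, div_le_div_iff₀ (by positivity) (by positivity)]
  have hε3 : εt ^ 3 ≤ εt ^ 2 := by nlinarith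
  have hεsq : εt ^ 2 ≤ 4 * (1 - r) ^ 2 := by nlinarith
  have hQ : 0 ≤ β ^ 2 * ψt ^ 2 * (M : ℝ) := by positivity
  nlinarith [mul_le_mul_of_nonneg_left hε3 hQ, mul_le_mul_of_nonneg_left hεsq hQ,
    mul_le_mul_of_nonneg_right hκtlt.le (mul_nonneg hQ (sq_nonneg εt)),
    mul_nonneg hQ (pow_nonneg hεpos.le 3)]
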